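/- arXiv:1811.01354 — 2 statements merged into one kernel-verified Lean document; each statement's English description precedes it below -/
import Mathlib

section
/- For every real ρ ≥ −1, the minimum over pairs (T,V) with supp(V) ⊆ supp(Q) of { D(T∘V‖Q∘P) + ρ·D(T∘V‖T×Q) } equals E₀(ρ,Q); moreover E₀(−1,Q) = lim_{ρ ↘ −1} E₀(ρ,Q) = −log ∑_y max_{x : Q(x)>0} P(y|x). If ρ > −1, the unique minimizer is the joint distribution T_ρ∘V_ρ; if ρ = −1, the minimizers are exactly the joint distributions T_{−1}∘V with V admissible at −1. -/
open scoped BigOperators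
open Filter Topology
set_option linter.unusedSectionVars false

/-- `f` is a probability mass function on a finite alphabet. -/
def IsPMF {α : Type*} [Fintype α] (f : α → ℝ) : Prop :=
  (∀ a, 0 ≤ f a) ∧ ∑ a, f a = 1

/-- `P` is a discrete memoryless channel from `𝓧` to `𝓨`. -/
def IsChannel {𝓧 𝓨 : Type*} [Fintype 𝓧] [Fintype 𝓨] (P : 𝓧 → 𝓨 → ℝ) : Prop :=
  ∀ x, IsPMF (P x)

/-- `V` is a conditional pmf on `𝓧` given `𝓨`. -/
def IsCondPMF {𝓧 𝓨 : Type*} [Fintype 𝓧] [Fintype 𝓨] (V : 𝓨 → 𝓧 → ℝ) : Prop :=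
  ∀ y, IsPMF (V y)

/-- one term `s·log(s/t)` of a KL divergence, with the conventions
    `0·log(0/t) = 0` and `s·log(s/0) = +∞` for `s > 0`. -/
noncomputable def klTerm (s t : ℝ) : EReal :=
  if s = 0 then 0 else if t = 0 then ⊤ else ((s * Real.log (s / t) : ℝ) : EReal)

/-- `D(T∘V ‖ Q∘P)`. -/
noncomputable def DQP {𝓧 𝓨 : Type*} [Fintype 𝓧] [Fintype 𝓨]
    (T : 𝓨 → ℝ) (V : 𝓨 → 𝓧 → ℝ) (Q : 𝓧 → ℝ) (P : 𝓧 → 𝓨 → ℝ) : EReal :=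
  ∑ y, ∑ x, klTerm (T y * V y x) (Q x * P x y)

/-- `D(T∘V ‖ T×Q)`. -/
noncomputable def DTQ {𝓧 𝓨 : Type*} [Fintype 𝓧] [Fintype 𝓨]
    (T : 𝓨 → ℝ) (V : 𝓨 → 𝓧 → ℝ) (Q : 𝓧 → ℝ) : EReal :=
  ∑ y, ∑ x, klTerm (T y * V y x) (T y * Q x)

/-- Gallager's function `E₀(ρ,Q)` (for `ρ > −1`). -/
noncomputable def E0 {𝓧 𝓨 : Type*} [Fintype 𝓧] [Fintype 𝓨]
    (ρ : ℝ) (Q : 𝓧 → ℝ) (P : 𝓧 → 𝓨 → ℝ) : ℝ :=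
  - Real.log (∑ y, (∑ x, Q x * P x y ^ (1 / (1 + ρ))) ^ (1 + ρ))

/-- The joint distribution `T_ρ∘V_ρ` on `𝓧 × 𝓨` (for `ρ > −1`). -/
noncomputable def Jrho {𝓧 𝓨 : Type*} [Fintype 𝓧] [Fintype 𝓨]
    (ρ : ℝ) (Q : 𝓧 → ℝ) (P : 𝓧 → 𝓨 → ℝ) (x : 𝓧) (y : 𝓨) : ℝ :=
  Q x * P x y ^ (1 / (1 + ρ)) * (∑ a, Q a * P a y ^ (1 / (1 + ρ))) ^ ρ /
    ∑ y', (∑ a, Q a * P a y' ^ (1 / (1 + ρ))) ^ (1 + ρ)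

/-- `max_{x : Q(x) > 0} P(y|x)`. -/
noncomputable def maxP {𝓧 𝓨 : Type*} (Q : 𝓧 → ℝ) (P : 𝓧 → 𝓨 → ℝ) (y : 𝓨) : ℝ :=
  ⨆ x : {x // 0 < Q x}, P x.1 y

/-- `E₀(−1,Q) = −log ∑_y max_{x : Q(x)>0} P(y|x)`. -/
noncomputable def E0m1 {𝓧 𝓨 : Type*} [Fintype 𝓧] [Fintype 𝓨]
    (Q : 𝓧 → ℝ) (P : 𝓧 → 𝓨 → ℝ) : ℝ :=
  - Real.log (∑ y, maxP Q P y)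

/-- `E₀(ρ,Q)` extended to `ρ = −1`. -/
noncomputable def E0full {𝓧 𝓨 : Type*} [Fintype 𝓧] [Fintype 𝓨]
    (ρ : ℝ) (Q : 𝓧 → ℝ) (P : 𝓧 → 𝓨 → ℝ) : ℝ :=
  if ρ = -1 then E0m1 Q P else E0 ρ Q P

/-- `T_{−1}(y) ∝ max_{a : Q(a)>0} P(y|a)`. -/
noncomputable def Tm1 {𝓧 𝓨 : Type*} [Fintype 𝓧] [Fintype 𝓨]
    (Q : 𝓧 → ℝ) (P : 𝓧 → 𝓨 → ℝ) (y : 𝓨) : ℝ :=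
  maxP Q P y / ∑ y', maxP Q P y'

/-- `V` is admissible at `ρ = −1`: `V(x|y) = 0` for every `x` outside
    `argmax_{a : Q(a)>0} P(y|a)`. -/
def AdmissibleAtM1 {𝓧 𝓨 : Type*} [Fintype 𝓧] [Fintype 𝓨]
    (Q : 𝓧 → ℝ) (P : 𝓧 → 𝓨 → ℝ) (V : 𝓨 → 𝓧 → ℝ) : Prop :=
  ∀ y x, ¬ (0 < Q x ∧ ∀ a, 0 < Q a → P a y ≤ P x y) → V y x = 0

/-- the error exponent `E_e(R,Q)`. -/
noncomputable def Ee {𝓧 𝓨 : Type*} [Fintype 𝓧] [Fintype 𝓨]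
    (R : ℝ) (Q : 𝓧 → ℝ) (P : 𝓧 → 𝓨 → ℝ) : EReal :=
  sInf {v | ∃ T : 𝓨 → ℝ, ∃ V : 𝓨 → 𝓧 → ℝ, IsPMF T ∧ IsCondPMF V ∧
    v = DQP T V Q P + max (DTQ T V Q - (R : EReal)) 0}

/-- the ML correct-decoding exponent `E_c^{ML}(R,Q)`. -/
noncomputable def EcML {𝓧 𝓨 : Type*} [Fintype 𝓧] [Fintype 𝓨]
    (R : ℝ) (Q : 𝓧 → ℝ) (P : 𝓧 → 𝓨 → ℝ) : EReal :=
  sInf {v | ∃ T : 𝓨 → ℝ, ∃ V : 𝓨 → 𝓧 → ℝ, IsPMF T ∧ IsCondPMF V ∧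
    v = DQP T V Q P + max ((R : EReal) - DTQ T V Q) 0}

/-- the strict correct-decoding exponent `E_c(R,Q)` (`+∞` if infeasible). -/
noncomputable def Ec {𝓧 𝓨 : Type*} [Fintype 𝓧] [Fintype 𝓨]
    (R : ℝ) (Q : 𝓧 → ℝ) (P : 𝓧 → 𝓨 → ℝ) : EReal :=
  sInf {v | ∃ T : 𝓨 → ℝ, ∃ V : 𝓨 → 𝓧 → ℝ, IsPMF T ∧ IsCondPMF V ∧
    (R : EReal) ≤ DTQ T V Q ∧ v = DQP T V Q P}

/-- the mutual information `I(Q∘P)`. -/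
noncomputable def MI {𝓧 𝓨 : Type*} [Fintype 𝓧] [Fintype 𝓨]
    (Q : 𝓧 → ℝ) (P : 𝓧 → 𝓨 → ℝ) : ℝ :=
  ∑ x, ∑ y, if Q x * P x y = 0 then 0
    else Q x * P x y * Real.log (P x y / ∑ a, Q a * P a y)

/-- the capacity `C(Z)` of the channel restricted to input letters in `Z`. -/
noncomputable def capacity {𝓧 𝓨 : Type*} [Fintype 𝓧] [Fintype 𝓨]
    (P : 𝓧 → 𝓨 → ℝ) (Z : Set 𝓧) : ℝ :=
  sSup {c | ∃ Q' : 𝓧 → ℝ, IsPMF Q' ∧ (∀ x, 0 < Q' x → x ∈ Z) ∧ c = MI Q' P}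

/-- `R_{−1}^{−}(Q)`. -/
noncomputable def Rm1minus {𝓧 𝓨 : Type*} [Fintype 𝓧] [Fintype 𝓨]
    (Q : 𝓧 → ℝ) (P : 𝓧 → 𝓨 → ℝ) : EReal :=
  sInf {v | ∃ V : 𝓨 → 𝓧 → ℝ, IsCondPMF V ∧ AdmissibleAtM1 Q P V ∧
    v = DTQ (Tm1 Q P) V Q}

/-- `R_{−1}^{+}(Q)`. -/
noncomputable def Rm1plus {𝓧 𝓨 : Type*} [Fintype 𝓧] [Fintype 𝓨]
    (Q : 𝓧 → ℝ) (P : 𝓧 → 𝓨 → ℝ) : EReal :=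
  sSup {v | ∃ V : 𝓨 → 𝓧 → ℝ, IsCondPMF V ∧ AdmissibleAtM1 Q P V ∧
    v = DTQ (Tm1 Q P) V Q}

/-- `F_ρ(T∘V, Q) = D(T∘V‖Q∘P) + ρ·D(T∘V‖T×Q)`. -/
noncomputable def Frho {𝓧 𝓨 : Type*} [Fintype 𝓧] [Fintype 𝓨]
    (ρ : ℝ) (T : 𝓨 → ℝ) (V : 𝓨 → 𝓧 → ℝ) (Q : 𝓧 → ℝ) (P : 𝓧 → 𝓨 → ℝ) : EReal :=
  DQP T V Q P + (ρ : EReal) * DTQ T V Q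

/-- the unconstrained penalized minimum
    `min_{T,V} { D(T∘V‖Q∘P) + ρ·(D(T∘V‖T×Q) − R) }`. -/
noncomputable def penMin {𝓧 𝓨 : Type*} [Fintype 𝓧] [Fintype 𝓨]
    (Q : 𝓧 → ℝ) (P : 𝓧 → 𝓨 → ℝ) (R ρ : ℝ) : EReal :=
  sInf {v | ∃ T : 𝓨 → ℝ, ∃ V : 𝓨 → 𝓧 → ℝ, IsPMF T ∧ IsCondPMF V ∧
    v = DQP T V Q P + (ρ : EReal) * (DTQ T V Q - (R : EReal))}

/-- the support-constrained penalized minimum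
    `min_{T,V : supp(V) ⊆ supp(Q)} { D(T∘V‖Q∘P) − ρ·(R − D(T∘V‖T×Q)) }`. -/
noncomputable def penMinS {𝓧 𝓨 : Type*} [Fintype 𝓧] [Fintype 𝓨]
    (Q : 𝓧 → ℝ) (P : 𝓧 → 𝓨 → ℝ) (R ρ : ℝ) : EReal :=
  sInf {v | ∃ T : 𝓨 → ℝ, ∃ V : 𝓨 → 𝓧 → ℝ, IsPMF T ∧ IsCondPMF V ∧
    (∀ y x, Q x = 0 → V y x = 0) ∧
    v = DQP T V Q P - (ρ : EReal) * ((R : EReal) - DTQ T V Q)}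

noncomputable def klR (s t : ℝ) : ℝ :=
  if s = 0 then 0 else s * Real.log (s / t)

lemma EReal.coe_finsum {ι : Type*} (s : Finset ι) (f : ι → ℝ) :
    ((∑ i ∈ s, f i : ℝ) : EReal) = ∑ i ∈ s, ((f i : EReal)) :=
  map_sum (⟨⟨Real.toEReal, EReal.coe_zero⟩, EReal.coe_add⟩ : ℝ →+ EReal) f s

lemma EReal.sum_ne_bot {ι : Type*} (s : Finset ι) (f : ι → EReal)
    (h : ∀ i ∈ s, f i ≠ ⊥) : ∑ i ∈ s, f i ≠ ⊥ := by
  classical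
  induction s using Finset.induction with
  | empty => simp
  | @insert a s' hx ih =>
    rw [Finset.sum_insert hx]
    intro hbot
    rcases EReal.add_eq_bot_iff.1 hbot with h1 | h1
    · exact h a (Finset.mem_insert_self a s') h1
    · exact ih (fun i hi => h i (Finset.mem_insert_of_mem hi)) h1

lemma EReal.sum_eq_top {ι : Type*} (s : Finset ι) (f : ι → EReal)
    (hb : ∀ i ∈ s, f i ≠ ⊥) (ht : ∃ i ∈ s, f i = ⊤) : ∑ i ∈ s, f i = ⊤ := by
  classical
  obtain ⟨i, hi, hfi⟩ := ht
  rw [← Finset.sum_erase_add s f hi, hfi]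
  exact EReal.add_top_of_ne_bot
    (EReal.sum_ne_bot _ _ (fun j hj => hb j (Finset.mem_of_mem_erase hj)))

lemma klTerm_ne_bot (s t : ℝ) : klTerm s t ≠ ⊥ := by
  unfold klTerm
  split_ifs
  · simp
  · simp
  · exact EReal.coe_ne_bot _

lemma klTerm_eq_coe {s t : ℝ} (h : s ≠ 0 → t ≠ 0) :
    klTerm s t = ((klR s t : ℝ) : EReal) := by
  unfold klTerm klR
  by_cases hs : s = 0
  · simp [hs]
  · simp [hs, h hs]

lemma klTerm_eq_top {s t : ℝ} (hs : s ≠ 0) (ht : t = 0) : klTerm s t = ⊤ := by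
  unfold klTerm; simp [hs, ht]

lemma sum_klTerm_eq {ι : Type*} [Fintype ι] (s t : ι → ℝ)
    (h : ∀ i, s i ≠ 0 → t i ≠ 0) :
    ∑ i, klTerm (s i) (t i) = ((∑ i, klR (s i) (t i) : ℝ) : EReal) := by
  rw [EReal.coe_finsum]
  exact Finset.sum_congr rfl (fun i _ => (klTerm_eq_coe (h i)))

/-- Pointwise Gibbs bound term. -/
lemma gibbs_pointwise {c b B : ℝ} (hc : 0 ≤ c) (hb : 0 ≤ b) (hB : 0 < B)
    (hcb : c ≠ 0 → b ≠ 0) :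
    0 ≤ klR c b + c * Real.log B - c + b / B ∧
      (klR c b + c * Real.log B - c + b / B = 0 ↔ c = b / B) := by
  by_cases hc0 : c = 0
  · subst hc0
    have hsimp : klR 0 b + 0 * Real.log B - 0 + b / B = b / B := by
      simp [klR]
    rw [hsimp]
    refine ⟨by positivity, ?_, ?_⟩
    · intro h; exact h.symm
    · intro h; exact h.symm
  · have hcpos : 0 < c := lt_of_le_of_ne hc (Ne.symm hc0)
    have hbpos : 0 < b := lt_of_le_of_ne hb (Ne.symm (hcb hc0))
    have hu : 0 < b / (B * c) := by positivity
    have key : klR c b + c * Real.log B - c + b / B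
        = c * ((b / (B * c)) - 1 - Real.log (b / (B * c))) := by
      rw [klR, if_neg hc0]
      have h1 : Real.log (b / (B * c)) = Real.log b - Real.log B - Real.log c := by
        rw [Real.log_div hbpos.ne' (by positivity), Real.log_mul hB.ne' hc0]
        ring
      have h2 : Real.log (c / b) = Real.log c - Real.log b :=
        Real.log_div hc0 hbpos.ne'
      rw [h1, h2]
      field_simp
      ring
    have hlog := Real.log_le_sub_one_of_pos hu
    constructor
    · rw [key]; nlinarith
    · rw [key]
      constructor
      · intro h
        have h3 : (b / (B * c)) - 1 - Real.log (b / (B * c)) = 0 := by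
          have := mul_eq_zero.1 h
          rcases this with h' | h'
          · exact absurd h' hc0
          · exact h'
        by_contra hne
        have hu1 : b / (B * c) ≠ 1 := by
          intro h1
          apply hne
          field_simp at h1 ⊢
          linarith [h1]
        have := Real.log_lt_sub_one_of_pos hu hu1
        linarith
      · intro h
        have : b / (B * c) = 1 := by
          rw [h]; field_simp
        rw [this]; simp

/-- Gibbs / log-sum inequality with equality condition, finite version. -/
lemma gibbs_sum {ι : Type*} [Fintype ι] (c b : ι → ℝ)
    (hc : ∀ i, 0 ≤ c i) (hb : ∀ i, 0 ≤ b i) (hcb : ∀ i, c i ≠ 0 → b i ≠ 0)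
    (hsum : ∑ i, c i = 1) :
    0 < ∑ i, b i ∧
    (- Real.log (∑ i, b i) ≤ ∑ i, klR (c i) (b i)) ∧
    ((∑ i, klR (c i) (b i) = - Real.log (∑ i, b i)) ↔
      ∀ i, c i = b i / ∑ i, b i) := by
  classical
  set B := ∑ i, b i with hB
  have hex : ∃ i, 0 < c i := by
    by_contra hno
    push_neg at hno
    have : ∀ i, c i = 0 := fun i => le_antisymm (hno i) (hc i)
    simp [this] at hsum
  obtain ⟨i0, hi0⟩ := hex
  have hBpos : 0 < B := by
    have hb0 : 0 < b i0 := lt_of_le_of_ne (hb i0) (Ne.symm (hcb i0 hi0.ne'))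
    have : b i0 ≤ B := Finset.single_le_sum (fun i _ => hb i) (Finset.mem_univ i0)
    linarith
  set g : ι → ℝ := fun i => klR (c i) (b i) + c i * Real.log B - c i + b i / B with hg
  have hgnn : ∀ i, 0 ≤ g i := fun i =>
    (gibbs_pointwise (hc i) (hb i) hBpos (hcb i)).1
  have hgiff : ∀ i, (g i = 0 ↔ c i = b i / B) := fun i =>
    (gibbs_pointwise (hc i) (hb i) hBpos (hcb i)).2
  have hsumg : ∑ i, g i = (∑ i, klR (c i) (b i)) + Real.log B := by
    simp only [hg]
    rw [Finset.sum_add_distrib, Finset.sum_sub_distrib, Finset.sum_add_distrib,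
      ← Finset.sum_mul, hsum, ← Finset.sum_div]
    field_simp
    rw [← hB]
    ring
  have hge : 0 ≤ ∑ i, g i := Finset.sum_nonneg (fun i _ => hgnn i)
  refine ⟨hBpos, by linarith [hsumg, hge], ?_⟩
  constructor
  · intro heq
    have hzero : ∑ i, g i = 0 := by rw [hsumg, heq]; ring
    intro i
    have := (Finset.sum_eq_zero_iff_of_nonneg (fun i _ => hgnn i)).1 hzero i
      (Finset.mem_univ i)
    exact (hgiff i).1 this
  · intro hall
    have : ∀ i, g i = 0 := fun i => (hgiff i).2 (hall i)
    have hzero : ∑ i, g i = 0 := by simp [this]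
    rw [hsumg] at hzero
    linarith

noncomputable def E0' {𝓧 𝓨 : Type*} [Fintype 𝓧] [Fintype 𝓨]
    (ρ : ℝ) (Q : 𝓧 → ℝ) (P : 𝓧 → 𝓨 → ℝ) : ℝ :=
  - Real.log (∑ y, (∑ x, Q x * P x y ^ (1 / (1 + ρ))) ^ (1 + ρ))

section Core

variable {𝓧 𝓨 : Type*} [Fintype 𝓧] [Fintype 𝓨]

/-- `A_ρ(y) = ∑_x Q x P(y|x)^{1/(1+ρ)}`. -/
noncomputable def AR (ρ : ℝ) (Q : 𝓧 → ℝ) (P : 𝓧 → 𝓨 → ℝ) (y : 𝓨) : ℝ :=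
  ∑ x, Q x * P x y ^ (1 / (1 + ρ))

/-- `Z_ρ = ∑_y A_ρ(y)^{1+ρ}`. -/
noncomputable def ZR (ρ : ℝ) (Q : 𝓧 → ℝ) (P : 𝓧 → 𝓨 → ℝ) : ℝ :=
  ∑ y, AR ρ Q P y ^ (1 + ρ)

lemma AR_nonneg {ρ : ℝ} {Q : 𝓧 → ℝ} {P : 𝓧 → 𝓨 → ℝ}
    (hQ : ∀ x, 0 ≤ Q x) (y : 𝓨) (hP : ∀ x, 0 ≤ P x y) : 0 ≤ AR ρ Q P y :=
  Finset.sum_nonneg fun x _ => mul_nonneg (hQ x) (Real.rpow_nonneg (hP x) _)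

lemma term_identity {ρ : ℝ} (hρ : -1 < ρ) {T V Q Pv : ℝ}
    (hT : 0 < T) (hV : 0 ≤ V) (hQ0 : 0 ≤ Q) (hP0 : 0 ≤ Pv)
    (hfin : T * V ≠ 0 → Q * Pv ≠ 0) :
    klR (T * V) (Q * Pv) + ρ * klR (T * V) (T * Q)
      = T * V * Real.log T + (1 + ρ) * T * klR V (Q * Pv ^ (1 / (1 + ρ))) := by
  have h1ρ : (1 : ℝ) + ρ ≠ 0 := by linarith
  by_cases hV0 : V = 0
  · simp [hV0, klR]
  · have hVpos : 0 < V := lt_of_le_of_ne hV (Ne.symm hV0)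
    have hTV : T * V ≠ 0 := by positivity
    have hQP := hfin hTV
    have hQpos : 0 < Q := lt_of_le_of_ne hQ0 (by rintro rfl; simp at hQP)
    have hPpos : 0 < Pv := lt_of_le_of_ne hP0 (by rintro rfl; simp at hQP)
    have hQPa : Q * Pv ^ (1 / (1 + ρ)) ≠ 0 := by
      have := Real.rpow_pos_of_pos hPpos (1 / (1 + ρ))
      positivity
    rw [klR, klR, klR, if_neg hTV, if_neg hTV, if_neg hV0]
    have e1 : Real.log (T * V / (Q * Pv)) =
        Real.log T + Real.log V - Real.log Q - Real.log Pv := by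
      rw [Real.log_div (by positivity) (by positivity),
        Real.log_mul hT.ne' hV0, Real.log_mul hQpos.ne' hPpos.ne']
      ring
    have e2 : Real.log (T * V / (T * Q)) = Real.log V - Real.log Q := by
      rw [Real.log_div (by positivity) (by positivity),
        Real.log_mul hT.ne' hV0, Real.log_mul hT.ne' hQpos.ne']
      ring
    have e3 : Real.log (V / (Q * Pv ^ (1 / (1 + ρ)))) =
        Real.log V - Real.log Q - (1 / (1 + ρ)) * Real.log Pv := by
      rw [Real.log_div hV0 hQPa,
        Real.log_mul hQpos.ne' (by positivity : (Pv ^ (1 / (1+ρ)) : ℝ) ≠ 0).symm.symm,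
        Real.log_rpow hPpos]
      ring
    rw [e1, e2, e3]
    field_simp
    ring

end Core

section Main

variable {𝓧 𝓨 : Type*} [Fintype 𝓧] [Fintype 𝓨]

/-- real-valued version of `Frho`. -/
noncomputable def FrhoR (ρ : ℝ) (T : 𝓨 → ℝ) (V : 𝓨 → 𝓧 → ℝ)
    (Q : 𝓧 → ℝ) (P : 𝓧 → 𝓨 → ℝ) : ℝ :=
  ∑ y, ∑ x, (klR (T y * V y x) (Q x * P x y) + ρ * klR (T y * V y x) (T y * Q x))

lemma ZR_pos {ρ : ℝ} {Q : 𝓧 → ℝ} {P : 𝓧 → 𝓨 → ℝ}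
    (hρ : -1 < ρ) (hP : ∀ x, (∀ y, 0 ≤ P x y) ∧ ∑ y, P x y = 1)
    (hQn : ∀ x, 0 ≤ Q x) (hQs : ∑ x, Q x = 1) : 0 < ZR ρ Q P := by
  have h1ρ : (0:ℝ) < 1 + ρ := by linarith
  obtain ⟨x0, hx0⟩ : ∃ x, 0 < Q x := by
    by_contra h
    push_neg at h
    have : ∀ x, Q x = 0 := fun x => le_antisymm (h x) (hQn x)
    simp [this] at hQs
  obtain ⟨y0, hy0⟩ : ∃ y, 0 < P x0 y := by
    by_contra h
    push_neg at h
    have : ∀ y, P x0 y = 0 := fun y => le_antisymm (h y) ((hP x0).1 y)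
    have h2 := (hP x0).2
    rw [Finset.sum_congr rfl (fun y _ => this y)] at h2
    simp at h2
  have hA0 : 0 < AR ρ Q P y0 := by
    have hterm : 0 < Q x0 * P x0 y0 ^ (1 / (1 + ρ)) :=
      mul_pos hx0 (Real.rpow_pos_of_pos hy0 _)
    have hle : Q x0 * P x0 y0 ^ (1 / (1 + ρ)) ≤ AR ρ Q P y0 :=
      Finset.single_le_sum
        (fun x _ => mul_nonneg (hQn x) (Real.rpow_nonneg ((hP x).1 y0) _))
        (Finset.mem_univ x0)
    linarith
  have hterm : 0 < AR ρ Q P y0 ^ (1 + ρ) := Real.rpow_pos_of_pos hA0 _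
  have hle : AR ρ Q P y0 ^ (1 + ρ) ≤ ZR ρ Q P :=
    Finset.single_le_sum
      (fun y _ => Real.rpow_nonneg (AR_nonneg hQn y (fun x => (hP x).1 y)) _)
      (Finset.mem_univ y0)
  linarith

/-- The central real inequality with equality characterization, `ρ > -1`. -/
lemma main_real {ρ : ℝ} (hρ : -1 < ρ) {Q : 𝓧 → ℝ} {P : 𝓧 → 𝓨 → ℝ}
    (hP : IsChannel P) (hQ : IsPMF Q) {T : 𝓨 → ℝ} {V : 𝓨 → 𝓧 → ℝ}
    (hT : IsPMF T) (hV : IsCondPMF V)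
    (hfin : ∀ y x, T y * V y x ≠ 0 → Q x * P x y ≠ 0) :
    E0' ρ Q P ≤ FrhoR ρ T V Q P ∧
    (FrhoR ρ T V Q P = E0' ρ Q P ↔ ∀ x y, T y * V y x = Jrho ρ Q P x y) := by
  classical
  have h1ρ : (0:ℝ) < 1 + ρ := by linarith
  set α := 1 / (1 + ρ) with hα
  set A := AR ρ Q P with hA
  set Z := ZR ρ Q P with hZdef
  have hZ : 0 < Z := ZR_pos hρ hP hQ.1 hQ.2
  have hE0 : E0' ρ Q P = - Real.log Z := rfl
  set b : 𝓨 → 𝓧 → ℝ := fun y x => Q x * P x y ^ α with hb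
  have hbnn : ∀ y x, 0 ≤ b y x := fun y x =>
    mul_nonneg (hQ.1 x) (Real.rpow_nonneg ((hP x).1 y) _)
  have hAb : ∀ y, A y = ∑ x, b y x := fun y => rfl
  have hAnn : ∀ y, 0 ≤ A y := fun y => AR_nonneg hQ.1 y (fun x => (hP x).1 y)
  -- compat for inner Gibbs
  have hcompat : ∀ y, 0 < T y → ∀ x, V y x ≠ 0 → b y x ≠ 0 := by
    intro y hTy x hVx
    have hTV : T y * V y x ≠ 0 := mul_ne_zero hTy.ne' hVx
    have hQP := hfin y x hTV
    have hQpos : 0 < Q x := lt_of_le_of_ne (hQ.1 x) (by rintro h; rw [← h] at hQP; simp at hQP)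
    have hPpos : 0 < P x y := lt_of_le_of_ne ((hP x).1 y) (by
      rintro h; rw [← h] at hQP; simp at hQP)
    have := Real.rpow_pos_of_pos hPpos α
    positivity
  -- the per-y identity for T y > 0
  have hterm : ∀ y, 0 < T y →
      ∑ x, (klR (T y * V y x) (Q x * P x y) + ρ * klR (T y * V y x) (T y * Q x))
        = T y * Real.log (T y) + (1 + ρ) * T y * ∑ x, klR (V y x) (b y x) := by
    intro y hTy
    have : ∀ x, klR (T y * V y x) (Q x * P x y) + ρ * klR (T y * V y x) (T y * Q x)
        = T y * V y x * Real.log (T y) + (1 + ρ) * T y * klR (V y x) (b y x) := by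
      intro x
      exact term_identity hρ hTy ((hV y).1 x) (hQ.1 x) ((hP x).1 y) (hfin y x)
    rw [Finset.sum_congr rfl (fun x _ => this x), Finset.sum_add_distrib,
      ← Finset.mul_sum]
    have h2 : ∀ x, T y * V y x * Real.log (T y)
        = (T y * Real.log (T y)) * V y x := by intro x; ring
    rw [Finset.sum_congr rfl (fun x _ => h2 x), ← Finset.mul_sum, (hV y).2, mul_one]
  -- inner Gibbs
  have hinner : ∀ y, 0 < T y → 0 < A y ∧
      (- Real.log (A y) ≤ ∑ x, klR (V y x) (b y x)) ∧
      ((∑ x, klR (V y x) (b y x) = - Real.log (A y)) ↔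
        ∀ x, V y x = b y x / A y) := by
    intro y hTy
    have h := gibbs_sum (V y) (b y) (hV y).1 (hbnn y)
      (fun x hx => hcompat y hTy x hx) (hV y).2
    rw [← hAb y] at h
    exact h
  have hApos : ∀ y, 0 < T y → 0 < A y := fun y hTy => (hinner y hTy).1
  -- outer Gibbs
  have hb'nn : ∀ y, 0 ≤ A y ^ (1 + ρ) := fun y => Real.rpow_nonneg (hAnn y) _
  have hb'compat : ∀ y, T y ≠ 0 → A y ^ (1 + ρ) ≠ 0 := by
    intro y hTy
    have hTpos : 0 < T y := lt_of_le_of_ne (hT.1 y) (Ne.symm hTy)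
    exact (Real.rpow_pos_of_pos (hApos y hTpos) _).ne'
  have houter := gibbs_sum T (fun y => A y ^ (1 + ρ)) hT.1 hb'nn hb'compat hT.2
  have hZsum : Z = ∑ y, A y ^ (1 + ρ) := rfl
  rw [← hZsum] at houter
  -- klR of T y against A^{1+ρ}
  have hklT : ∀ y, 0 < T y → klR (T y) (A y ^ (1 + ρ))
      = T y * Real.log (T y) - (1 + ρ) * T y * Real.log (A y) := by
    intro y hTy
    have hAy := hApos y hTy
    rw [klR, if_neg hTy.ne',
      Real.log_div hTy.ne' (Real.rpow_pos_of_pos hAy _).ne', Real.log_rpow hAy]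
    ring
  set term : 𝓨 → ℝ := fun y =>
    ∑ x, (klR (T y * V y x) (Q x * P x y) + ρ * klR (T y * V y x) (T y * Q x))
    with hterm_def
  have hterm' : ∀ y, 0 < T y → term y
      = T y * Real.log (T y) + (1 + ρ) * T y * ∑ x, klR (V y x) (b y x) :=
    fun y hTy => hterm y hTy
  have hterm0 : ∀ y, T y = 0 → term y = 0 := by
    intro y hTy
    apply Finset.sum_eq_zero
    intro x _
    simp [hTy, klR]
  have hFR : FrhoR ρ T V Q P = ∑ y, term y := rfl
  have hge_y : ∀ y, klR (T y) (A y ^ (1 + ρ)) ≤ term y := by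
    intro y
    rcases eq_or_lt_of_le (hT.1 y) with hTy | hTy
    · rw [hterm0 y hTy.symm, ← hTy]
      simp [klR]
    · rw [hterm' y hTy, hklT y hTy]
      have hS := (hinner y hTy).2.1
      have hmul := mul_le_mul_of_nonneg_left hS
        (by positivity : (0:ℝ) ≤ (1 + ρ) * T y)
      nlinarith [hmul]
  have hsum_le : ∑ y, klR (T y) (A y ^ (1 + ρ)) ≤ FrhoR ρ T V Q P := by
    rw [hFR]; exact Finset.sum_le_sum (fun y _ => hge_y y)
  have hlow : E0' ρ Q P ≤ FrhoR ρ T V Q P := by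
    rw [hE0]
    exact le_trans houter.2.1 hsum_le
  have hJ : ∀ x y, Jrho ρ Q P x y = b y x * A y ^ ρ / Z := fun x y => rfl
  have hAA : ∀ y, A y * A y ^ ρ = A y ^ (1 + ρ) := by
    intro y
    rcases eq_or_lt_of_le (hAnn y) with hAy | hAy
    · rw [← hAy, Real.zero_rpow (by linarith : (1:ℝ) + ρ ≠ 0)]
      ring
    · rw [add_comm, Real.rpow_add hAy, Real.rpow_one]
      ring
  refine ⟨hlow, ?_, ?_⟩
  · -- equality implies TV = Jrho
    intro heq
    have h1 : ∑ y, klR (T y) (A y ^ (1 + ρ)) = - Real.log Z := by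
      rw [hE0] at heq
      linarith [houter.2.1, hsum_le]
    have hTeq : ∀ y, T y = A y ^ (1 + ρ) / Z := houter.2.2.1 h1
    have h2 : ∀ y, term y = klR (T y) (A y ^ (1 + ρ)) := by
      have hsum0 : ∑ y, (term y - klR (T y) (A y ^ (1 + ρ))) = 0 := by
        rw [Finset.sum_sub_distrib, ← hFR, heq, hE0, h1]
        ring
      intro y
      have := (Finset.sum_eq_zero_iff_of_nonneg
        (fun y _ => sub_nonneg.2 (hge_y y))).1 hsum0 y (Finset.mem_univ y)
      linarith
    intro x y
    rcases eq_or_lt_of_le (hT.1 y) with hTy | hTy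
    · -- T y = 0
      have hA0 : A y = 0 := by
        by_contra hA0
        have hApos' : 0 < A y := lt_of_le_of_ne (hAnn y) (Ne.symm hA0)
        have := Real.rpow_pos_of_pos hApos' (1 + ρ)
        have := hTeq y
        rw [← hTy] at this
        have hzero : A y ^ (1 + ρ) = 0 := by
          field_simp at this
          linarith [this]
        linarith
      have hb0 : b y x = 0 := by
        have := (Finset.sum_eq_zero_iff_of_nonneg
          (fun x _ => hbnn y x)).1 (by rw [← hAb y]; exact hA0) x (Finset.mem_univ x)
        exact this
      rw [hJ, hb0, ← hTy]
      simp
    · -- T y > 0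
      have hAy := hApos y hTy
      have hVeq : ∀ x, V y x = b y x / A y := by
        apply (hinner y hTy).2.2.1
        have := h2 y
        rw [hterm' y hTy, hklT y hTy] at this
        have hne : (1 + ρ) * T y ≠ 0 := by positivity
        have : (1 + ρ) * T y * (∑ x, klR (V y x) (b y x))
            = (1 + ρ) * T y * (- Real.log (A y)) := by linarith
        exact mul_left_cancel₀ hne this
      rw [hJ, hTeq y, hVeq x]
      have h3 : A y ^ (1 + ρ) = A y ^ ρ * A y := by rw [← hAA y]; ring
      rw [h3]
      field_simp
  · -- TV = Jrho implies equality
    intro hJall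
    have hTeq : ∀ y, T y = A y ^ (1 + ρ) / Z := by
      intro y
      have : T y = ∑ x, T y * V y x := by
        rw [← Finset.mul_sum, (hV y).2, mul_one]
      rw [this, Finset.sum_congr rfl (fun x _ => hJall x y)]
      have : ∑ x, Jrho ρ Q P x y = (∑ x, b y x) * A y ^ ρ / Z := by
        rw [Finset.sum_congr rfl (fun x _ => hJ x y), ← Finset.sum_div,
          ← Finset.sum_mul]
      rw [this, ← hAb y, hAA y]
    have houter_eq : ∑ y, klR (T y) (A y ^ (1 + ρ)) = - Real.log Z :=
      houter.2.2.2 hTeq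
    have h2 : ∀ y, term y = klR (T y) (A y ^ (1 + ρ)) := by
      intro y
      rcases eq_or_lt_of_le (hT.1 y) with hTy | hTy
      · rw [hterm0 y hTy.symm, ← hTy]; simp [klR]
      · have hAy := hApos y hTy
        have hVeq : ∀ x, V y x = b y x / A y := by
          intro x
          have h4 := hJall x y
          rw [hJ] at h4
          have h5 : V y x = b y x * A y ^ ρ / Z / T y := by
            rw [← h4]; field_simp
          rw [h5, hTeq y]
          rw [← hAA y]
          field_simp
        have hS : ∑ x, klR (V y x) (b y x) = - Real.log (A y) :=
          (hinner y hTy).2.2.2 hVeq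
        rw [hterm' y hTy, hklT y hTy, hS]
        ring
    rw [hFR, Finset.sum_congr rfl (fun y _ => h2 y), houter_eq, hE0]

end Main



section M1

variable {𝓧 𝓨 : Type*} [Fintype 𝓧] [Fintype 𝓨]

lemma maxP_attained {Q : 𝓧 → ℝ} {P : 𝓧 → 𝓨 → ℝ} (hex : ∃ x, 0 < Q x) (y : 𝓨) :
    ∃ x, 0 < Q x ∧ P x y = maxP Q P y := by
  haveI : Nonempty {x // 0 < Q x} := ⟨⟨hex.choose, hex.choose_spec⟩⟩
  obtain ⟨i, hi⟩ := Finite.exists_max (fun x : {x // 0 < Q x} => P x.1 y)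
  refine ⟨i.1, i.2, le_antisymm ?_ (ciSup_le hi)⟩
  exact le_ciSup (f := fun x : {x // 0 < Q x} => P x.1 y)
    (Set.Finite.bddAbove (Set.finite_range _)) i

lemma le_maxP {Q : 𝓧 → ℝ} {P : 𝓧 → 𝓨 → ℝ} {x : 𝓧} (hx : 0 < Q x) (y : 𝓨) :
    P x y ≤ maxP Q P y :=
  le_ciSup (f := fun x : {x // 0 < Q x} => P x.1 y)
    (Set.Finite.bddAbove (Set.finite_range _)) ⟨x, hx⟩

lemma maxP_nonneg {Q : 𝓧 → ℝ} {P : 𝓧 → 𝓨 → ℝ} (hP : IsChannel P)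
    (hex : ∃ x, 0 < Q x) (y : 𝓨) : 0 ≤ maxP Q P y := by
  obtain ⟨x, hx, hxe⟩ := maxP_attained hex y
  rw [← hxe]; exact (hP x).1 y

lemma exists_Q_pos {Q : 𝓧 → ℝ} (hQ : IsPMF Q) : ∃ x, 0 < Q x := by
  by_contra h
  push_neg at h
  have : ∀ x, Q x = 0 := fun x => le_antisymm (h x) (hQ.1 x)
  have := hQ.2
  simp [‹∀ x, Q x = 0›] at this

lemma sum_maxP_pos {Q : 𝓧 → ℝ} {P : 𝓧 → 𝓨 → ℝ} [Nonempty 𝓨]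
    (hP : IsChannel P) (hQ : IsPMF Q) : 0 < ∑ y, maxP Q P y := by
  obtain ⟨x0, hx0⟩ := exists_Q_pos hQ
  obtain ⟨y0, hy0⟩ : ∃ y, 0 < P x0 y := by
    by_contra h
    push_neg at h
    have hz : ∀ y, P x0 y = 0 := fun y => le_antisymm (h y) ((hP x0).1 y)
    have h2 := (hP x0).2
    rw [Finset.sum_congr rfl (fun y _ => hz y)] at h2
    simp at h2
  have h1 : 0 < maxP Q P y0 := lt_of_lt_of_le hy0 (le_maxP hx0 y0)
  have h2 : maxP Q P y0 ≤ ∑ y, maxP Q P y :=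
    Finset.single_le_sum (fun y _ => maxP_nonneg hP ⟨x0, hx0⟩ y) (Finset.mem_univ y0)
  linarith

/-- central real inequality at `ρ = -1`. -/
lemma main_real_m1 {Q : 𝓧 → ℝ} {P : 𝓧 → 𝓨 → ℝ} [Nonempty 𝓨]
    (hP : IsChannel P) (hQ : IsPMF Q) {T : 𝓨 → ℝ} {V : 𝓨 → 𝓧 → ℝ}
    (hT : IsPMF T) (hV : IsCondPMF V)
    (hsupp : ∀ y x, Q x = 0 → V y x = 0)
    (hfin : ∀ y x, T y * V y x ≠ 0 → Q x * P x y ≠ 0) :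
    E0m1 Q P ≤ FrhoR (-1) T V Q P ∧
    (FrhoR (-1) T V Q P = E0m1 Q P ↔
      ((∀ y, T y = Tm1 Q P y) ∧ ∀ y x, T y * V y x ≠ 0 → P x y = maxP Q P y)) := by
  classical
  have hexQ := exists_Q_pos hQ
  set m : 𝓨 → ℝ := maxP Q P with hm
  set M : ℝ := ∑ y, m y with hM
  have hMpos : 0 < M := sum_maxP_pos hP hQ
  have hmnn : ∀ y, 0 ≤ m y := fun y => maxP_nonneg hP hexQ y
  have hE0 : E0m1 Q P = - Real.log M := rfl
  -- positivity facts on support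
  have hpos : ∀ y x, T y * V y x ≠ 0 → 0 < Q x ∧ 0 < P x y ∧ 0 < m y ∧
      0 < T y ∧ 0 < V y x := by
    intro y x hTV
    have hQP := hfin y x hTV
    have hT0 : T y ≠ 0 := fun h => hTV (by rw [h]; ring)
    have hV0 : V y x ≠ 0 := fun h => hTV (by rw [h]; ring)
    have hQpos : 0 < Q x := lt_of_le_of_ne (hQ.1 x)
      (by rintro h; rw [← h] at hQP; simp at hQP)
    have hPpos : 0 < P x y := lt_of_le_of_ne ((hP x).1 y)
      (by rintro h; rw [← h] at hQP; simp at hQP)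
    exact ⟨hQpos, hPpos, lt_of_lt_of_le hPpos (le_maxP hQpos y),
      lt_of_le_of_ne (hT.1 y) (Ne.symm hT0), lt_of_le_of_ne ((hV y).1 x) (Ne.symm hV0)⟩
  -- pointwise gap
  set g : 𝓨 → 𝓧 → ℝ := fun y x =>
    klR (T y * V y x) (Q x * P x y) + (-1) * klR (T y * V y x) (T y * Q x)
      - T y * V y x * (Real.log (T y) - Real.log (m y)) with hg
  have hgkey : ∀ y x, 0 ≤ g y x ∧
      (g y x = 0 ↔ (T y * V y x = 0 ∨ P x y = m y)) := by
    intro y x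
    by_cases hTV : T y * V y x = 0
    · constructor
      · simp [hg, hTV, klR]
      · simp [hg, hTV, klR]
    · obtain ⟨hQpos, hPpos, hmpos, hTpos, hVpos⟩ := hpos y x hTV
      have hTVpos : 0 < T y * V y x := mul_pos hTpos hVpos
      have hkey : g y x = T y * V y x * (Real.log (m y) - Real.log (P x y)) := by
        simp only [hg, klR, if_neg hTV]
        have e1 : Real.log (T y * V y x / (Q x * P x y))
            = Real.log (T y) + Real.log (V y x) - Real.log (Q x) - Real.log (P x y) := by
          rw [Real.log_div (by positivity) (by positivity),
            Real.log_mul hTpos.ne' hVpos.ne', Real.log_mul hQpos.ne' hPpos.ne']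
          ring
        have e2 : Real.log (T y * V y x / (T y * Q x))
            = Real.log (V y x) - Real.log (Q x) := by
          rw [Real.log_div (by positivity) (by positivity),
            Real.log_mul hTpos.ne' hVpos.ne', Real.log_mul hTpos.ne' hQpos.ne']
          ring
        rw [e1, e2]
        ring
      have hle : Real.log (P x y) ≤ Real.log (m y) :=
        Real.log_le_log hPpos (le_maxP hQpos y)
      constructor
      · rw [hkey]; nlinarith
      · rw [hkey]
        constructor
        · intro h0
          right
          have : Real.log (m y) - Real.log (P x y) = 0 := by
            rcases mul_eq_zero.1 h0 with h | h
            · exact absurd h hTV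
            · exact h
          have hlogeq : Real.log (P x y) = Real.log (m y) := by linarith
          exact (Real.log_injOn_pos (Set.mem_Ioi.2 hPpos)
            (Set.mem_Ioi.2 hmpos) hlogeq)
        · rintro (h | h)
          · exact absurd h hTV
          · rw [h]; ring
  -- per-y term
  set term : 𝓨 → ℝ := fun y =>
    ∑ x, (klR (T y * V y x) (Q x * P x y) + (-1) * klR (T y * V y x) (T y * Q x))
    with hterm_def
  have hFR : FrhoR (-1) T V Q P = ∑ y, term y := rfl
  have hterm0 : ∀ y, T y = 0 → term y = 0 := by
    intro y hTy
    apply Finset.sum_eq_zero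
    intro x _
    simp [hTy, klR]
  have hmTpos : ∀ y, 0 < T y → 0 < m y := by
    intro y hTy
    obtain ⟨x, hVx⟩ : ∃ x, V y x ≠ 0 := by
      by_contra h
      push_neg at h
      have := (hV y).2
      rw [Finset.sum_congr rfl (fun x _ => h x)] at this
      simp at this
    exact (hpos y x (mul_ne_zero hTy.ne' hVx)).2.2.1
  have hklT : ∀ y, 0 < T y → klR (T y) (m y)
      = T y * (Real.log (T y) - Real.log (m y)) := by
    intro y hTy
    rw [klR, if_neg hTy.ne', Real.log_div hTy.ne' (hmTpos y hTy).ne']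
  have hterm_eq : ∀ y, term y - klR (T y) (m y) = ∑ x, g y x := by
    intro y
    rcases eq_or_lt_of_le (hT.1 y) with hTy | hTy
    · rw [hterm0 y hTy.symm, ← hTy]
      have : ∀ x, g y x = 0 := by
        intro x
        simp [hg, ← hTy, klR]
      simp [klR, this]
    · have hsum : ∑ x, g y x
          = term y - ∑ x, T y * V y x * (Real.log (T y) - Real.log (m y)) := by
        simp only [hg]
        rw [Finset.sum_sub_distrib]
      have hVsum : ∑ x, T y * V y x * (Real.log (T y) - Real.log (m y))
          = T y * (Real.log (T y) - Real.log (m y)) := by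
        have h2 : ∀ x, T y * V y x * (Real.log (T y) - Real.log (m y))
            = (T y * (Real.log (T y) - Real.log (m y))) * V y x := by intro x; ring
        rw [Finset.sum_congr rfl (fun x _ => h2 x), ← Finset.mul_sum, (hV y).2, mul_one]
      rw [hsum, hVsum, hklT y hTy]
  have hge_y : ∀ y, klR (T y) (m y) ≤ term y := by
    intro y
    have h1 := hterm_eq y
    have hgsum : 0 ≤ ∑ x, g y x := Finset.sum_nonneg (fun x _ => (hgkey y x).1)
    linarith
  have hcompatT : ∀ y, T y ≠ 0 → m y ≠ 0 := by
    intro y hTy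
    exact (hmTpos y (lt_of_le_of_ne (hT.1 y) (Ne.symm hTy))).ne'
  have houter := gibbs_sum T m hT.1 hmnn hcompatT hT.2
  rw [← hM] at houter
  have hsum_le : ∑ y, klR (T y) (m y) ≤ FrhoR (-1) T V Q P := by
    rw [hFR]; exact Finset.sum_le_sum fun y _ => hge_y y
  have hlow : E0m1 Q P ≤ FrhoR (-1) T V Q P := by
    rw [hE0]; exact le_trans houter.2.1 hsum_le
  have hTm1 : ∀ y, Tm1 Q P y = m y / M := fun y => rfl
  refine ⟨hlow, ?_, ?_⟩
  · intro heq
    rw [hE0] at heq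
    have h1 : ∑ y, klR (T y) (m y) = - Real.log M := by
      linarith [houter.2.1, hsum_le]
    have hTeq : ∀ y, T y = m y / M := houter.2.2.1 h1
    have hterm_all : ∀ y, term y = klR (T y) (m y) := by
      have hsum0 : ∑ y, (term y - klR (T y) (m y)) = 0 := by
        rw [Finset.sum_sub_distrib, ← hFR, heq, h1]
        ring
      intro y
      have h2 := (Finset.sum_eq_zero_iff_of_nonneg
        (fun y _ => sub_nonneg.2 (hge_y y))).1 hsum0 y (Finset.mem_univ y)
      linarith
    constructor
    · intro y; exact (hTeq y).trans (hTm1 y).symm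
    · intro y x hTV
      have hg0 : ∑ x, g y x = 0 := by
        rw [← hterm_eq y, hterm_all y]; ring
      have h3 := (Finset.sum_eq_zero_iff_of_nonneg
        (fun x _ => (hgkey y x).1)).1 hg0 x (Finset.mem_univ x)
      rcases (hgkey y x).2.1 h3 with h | h
      · exact absurd h hTV
      · exact h
  · rintro ⟨hTeq, hPeq⟩
    have hTeq' : ∀ y, T y = m y / M := fun y => (hTeq y).trans (hTm1 y)
    have houter_eq : ∑ y, klR (T y) (m y) = - Real.log M := houter.2.2.2 hTeq'
    have hterm_all : ∀ y, term y = klR (T y) (m y) := by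
      intro y
      have hg0 : ∀ x, g y x = 0 := by
        intro x
        apply (hgkey y x).2.2
        by_cases hTV : T y * V y x = 0
        · exact Or.inl hTV
        · exact Or.inr (hPeq y x hTV)
      have h4 : ∑ x, g y x = 0 := by
        rw [Finset.sum_congr rfl (fun x _ => hg0 x)]
        simp
      linarith [hterm_eq y]
    rw [hFR, Finset.sum_congr rfl (fun y _ => hterm_all y), houter_eq, hE0]

end M1


section Bridge

variable {𝓧 𝓨 : Type*} [Fintype 𝓧] [Fintype 𝓨]

lemma DQP_eq_coe {T : 𝓨 → ℝ} {V : 𝓨 → 𝓧 → ℝ} {Q : 𝓧 → ℝ} {P : 𝓧 → 𝓨 → ℝ}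
    (h : ∀ y x, T y * V y x ≠ 0 → Q x * P x y ≠ 0) :
    DQP T V Q P = ((∑ y, ∑ x, klR (T y * V y x) (Q x * P x y) : ℝ) : EReal) := by
  rw [DQP, EReal.coe_finsum]
  exact Finset.sum_congr rfl fun y _ => sum_klTerm_eq _ _ (h y)

lemma DTQ_eq_coe {T : 𝓨 → ℝ} {V : 𝓨 → 𝓧 → ℝ} {Q : 𝓧 → ℝ}
    (h : ∀ y x, T y * V y x ≠ 0 → T y * Q x ≠ 0) :
    DTQ T V Q = ((∑ y, ∑ x, klR (T y * V y x) (T y * Q x) : ℝ) : EReal) := by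
  rw [DTQ, EReal.coe_finsum]
  exact Finset.sum_congr rfl fun y _ => sum_klTerm_eq _ _ (h y)

lemma DTQ_compat {T : 𝓨 → ℝ} {V : 𝓨 → 𝓧 → ℝ} {Q : 𝓧 → ℝ}
    (hsupp : ∀ y x, Q x = 0 → V y x = 0) :
    ∀ y x, T y * V y x ≠ 0 → T y * Q x ≠ 0 := by
  intro y x hTV
  have hT : T y ≠ 0 := fun h => hTV (by rw [h]; ring)
  have hV : V y x ≠ 0 := fun h => hTV (by rw [h]; ring)
  have hQ : Q x ≠ 0 := fun h => hV (hsupp y x h)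
  exact mul_ne_zero hT hQ

lemma FrhoR_split (ρ : ℝ) (T : 𝓨 → ℝ) (V : 𝓨 → 𝓧 → ℝ) (Q : 𝓧 → ℝ) (P : 𝓧 → 𝓨 → ℝ) :
    FrhoR ρ T V Q P = (∑ y, ∑ x, klR (T y * V y x) (Q x * P x y))
      + ρ * ∑ y, ∑ x, klR (T y * V y x) (T y * Q x) := by
  rw [FrhoR]
  rw [Finset.sum_congr rfl (fun y (_ : y ∈ Finset.univ) => Finset.sum_add_distrib),
    Finset.sum_add_distrib]
  congr 1
  rw [Finset.mul_sum]
  refine Finset.sum_congr rfl fun y _ => ?_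
  rw [Finset.mul_sum]

lemma Frho_eq_coe {ρ : ℝ} {T : 𝓨 → ℝ} {V : 𝓨 → 𝓧 → ℝ} {Q : 𝓧 → ℝ} {P : 𝓧 → 𝓨 → ℝ}
    (hsupp : ∀ y x, Q x = 0 → V y x = 0)
    (hfin : ∀ y x, T y * V y x ≠ 0 → Q x * P x y ≠ 0) :
    DQP T V Q P + (ρ : EReal) * DTQ T V Q = ((FrhoR ρ T V Q P : ℝ) : EReal) := by
  rw [DQP_eq_coe hfin, DTQ_eq_coe (DTQ_compat hsupp), ← EReal.coe_mul,
    ← EReal.coe_add, FrhoR_split]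

lemma DQP_top {T : 𝓨 → ℝ} {V : 𝓨 → 𝓧 → ℝ} {Q : 𝓧 → ℝ} {P : 𝓧 → 𝓨 → ℝ}
    (h : ∃ y x, T y * V y x ≠ 0 ∧ Q x * P x y = 0) : DQP T V Q P = ⊤ := by
  obtain ⟨y, x, h1, h2⟩ := h
  apply EReal.sum_eq_top
  · intro y' _
    exact EReal.sum_ne_bot _ _ (fun x' _ => klTerm_ne_bot _ _)
  · refine ⟨y, Finset.mem_univ y, EReal.sum_eq_top _ _
      (fun x' _ => klTerm_ne_bot _ _) ⟨x, Finset.mem_univ x, klTerm_eq_top h1 h2⟩⟩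

lemma Frho_top {ρ : ℝ} {T : 𝓨 → ℝ} {V : 𝓨 → 𝓧 → ℝ} {Q : 𝓧 → ℝ} {P : 𝓧 → 𝓨 → ℝ}
    (hsupp : ∀ y x, Q x = 0 → V y x = 0)
    (h : ∃ y x, T y * V y x ≠ 0 ∧ Q x * P x y = 0) :
    DQP T V Q P + (ρ : EReal) * DTQ T V Q = ⊤ := by
  rw [DQP_top h, DTQ_eq_coe (DTQ_compat hsupp), ← EReal.coe_mul]
  exact EReal.top_add_of_ne_bot (EReal.coe_ne_bot _)

/-- EReal master lemma for `ρ > -1`. -/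
lemma ereal_main {ρ : ℝ} (hρ : -1 < ρ) {Q : 𝓧 → ℝ} {P : 𝓧 → 𝓨 → ℝ}
    (hP : IsChannel P) (hQ : IsPMF Q) {T : 𝓨 → ℝ} {V : 𝓨 → 𝓧 → ℝ}
    (hT : IsPMF T) (hV : IsCondPMF V)
    (hsupp : ∀ y x, Q x = 0 → V y x = 0) :
    ((E0 ρ Q P : ℝ) : EReal) ≤ DQP T V Q P + (ρ : EReal) * DTQ T V Q ∧
    (DQP T V Q P + (ρ : EReal) * DTQ T V Q = ((E0 ρ Q P : ℝ) : EReal) ↔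
      ∀ x y, T y * V y x = Jrho ρ Q P x y) := by
  have hE : E0 ρ Q P = E0' ρ Q P := rfl
  by_cases hfin : ∀ y x, T y * V y x ≠ 0 → Q x * P x y ≠ 0
  · have hmain := main_real hρ hP hQ hT hV hfin
    rw [Frho_eq_coe hsupp hfin, hE]
    constructor
    · exact_mod_cast hmain.1
    · rw [EReal.coe_eq_coe_iff]
      exact hmain.2
  · push_neg at hfin
    obtain ⟨y0, x0, hTV0, hQP0⟩ := hfin
    have htop := Frho_top (ρ := ρ) hsupp ⟨y0, x0, hTV0, hQP0⟩
    constructor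
    · rw [htop]; exact le_top
    · constructor
      · intro h
        rw [htop] at h
        exact absurd h.symm (EReal.coe_ne_top _)
      · intro hJall
        exfalso
        have h1ρ : (1:ℝ) + ρ ≠ 0 := by linarith
        have hb0 : Q x0 * P x0 y0 ^ (1 / (1 + ρ)) = 0 := by
          rcases mul_eq_zero.1 hQP0 with h | h
          · rw [h]; ring
          · rw [h, Real.zero_rpow (by simp [h1ρ] : (1:ℝ) / (1 + ρ) ≠ 0)]; ring
        have := hJall x0 y0
        rw [Jrho, hb0] at this
        simp at this
        exact hTV0 (mul_eq_zero.2 this)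

/-- EReal master lemma for `ρ = -1`. -/
lemma ereal_main_m1 {Q : 𝓧 → ℝ} {P : 𝓧 → 𝓨 → ℝ} [Nonempty 𝓨]
    (hP : IsChannel P) (hQ : IsPMF Q) {T : 𝓨 → ℝ} {V : 𝓨 → 𝓧 → ℝ}
    (hT : IsPMF T) (hV : IsCondPMF V)
    (hsupp : ∀ y x, Q x = 0 → V y x = 0) :
    ((E0m1 Q P : ℝ) : EReal) ≤ DQP T V Q P + (((-1:ℝ)) : EReal) * DTQ T V Q ∧
    (DQP T V Q P + (((-1:ℝ)) : EReal) * DTQ T V Q = ((E0m1 Q P : ℝ) : EReal) ↔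
      ((∀ y, T y = Tm1 Q P y) ∧ ∀ y x, T y * V y x ≠ 0 → P x y = maxP Q P y)) := by
  by_cases hfin : ∀ y x, T y * V y x ≠ 0 → Q x * P x y ≠ 0
  · have hmain := main_real_m1 hP hQ hT hV hsupp hfin
    rw [Frho_eq_coe hsupp hfin]
    constructor
    · exact_mod_cast hmain.1
    · rw [EReal.coe_eq_coe_iff]
      exact hmain.2
  · push_neg at hfin
    obtain ⟨y0, x0, hTV0, hQP0⟩ := hfin
    have htop := Frho_top (ρ := (-1:ℝ)) hsupp ⟨y0, x0, hTV0, hQP0⟩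
    constructor
    · rw [htop]; exact le_top
    · constructor
      · intro h
        rw [htop] at h
        exact absurd h.symm (EReal.coe_ne_top _)
      · rintro ⟨hTeq, hPeq⟩
        exfalso
        have hT0 : T y0 ≠ 0 := fun h => hTV0 (by rw [h]; ring)
        have hV0 : V y0 x0 ≠ 0 := fun h => hTV0 (by rw [h]; ring)
        have hQpos : Q x0 ≠ 0 := fun h => hV0 (hsupp y0 x0 h)
        have hP0 : P x0 y0 = 0 := by
          rcases mul_eq_zero.1 hQP0 with h | h
          · exact absurd h hQpos
          · exact h
        have hmax0 : maxP Q P y0 = 0 := by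
          rw [← hPeq y0 x0 hTV0, hP0]
        have : T y0 = 0 := by
          rw [hTeq y0, Tm1, hmax0]
          simp
        exact hT0 this

end Bridge


section Constructions

variable {𝓧 𝓨 : Type*} [Fintype 𝓧] [Fintype 𝓨]

/-- explicit minimizer for `ρ > -1`. -/
lemma exists_min {ρ : ℝ} (hρ : -1 < ρ) {Q : 𝓧 → ℝ} {P : 𝓧 → 𝓨 → ℝ}
    (hP : IsChannel P) (hQ : IsPMF Q) :
    ∃ T : 𝓨 → ℝ, ∃ V : 𝓨 → 𝓧 → ℝ, IsPMF T ∧ IsCondPMF V ∧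
      (∀ y x, Q x = 0 → V y x = 0) ∧
      (∀ x y, T y * V y x = Jrho ρ Q P x y) := by
  classical
  have h1ρ : (0:ℝ) < 1 + ρ := by linarith
  set A := AR ρ Q P with hA
  set Z := ZR ρ Q P with hZ
  have hZpos : 0 < Z := ZR_pos hρ hP hQ.1 hQ.2
  have hAnn : ∀ y, 0 ≤ A y := fun y => AR_nonneg hQ.1 y (fun x => (hP x).1 y)
  set b : 𝓨 → 𝓧 → ℝ := fun y x => Q x * P x y ^ (1 / (1 + ρ)) with hb
  have hbnn : ∀ y x, 0 ≤ b y x := fun y x =>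
    mul_nonneg (hQ.1 x) (Real.rpow_nonneg ((hP x).1 y) _)
  have hAb : ∀ y, A y = ∑ x, b y x := fun y => rfl
  refine ⟨fun y => A y ^ (1 + ρ) / Z,
    fun y x => if 0 < A y then b y x / A y else Q x, ⟨?_, ?_⟩, ?_, ?_, ?_⟩
  · intro y
    exact div_nonneg (Real.rpow_nonneg (hAnn y) _) hZpos.le
  · rw [← Finset.sum_div]
    exact div_self hZpos.ne'
  · intro y
    by_cases hAy : 0 < A y
    · constructor
      · intro x
        simp only [if_pos hAy]
        exact div_nonneg (hbnn y x) hAy.le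
      · simp only [if_pos hAy]
        rw [← Finset.sum_div, ← hAb y]
        exact div_self hAy.ne'
    · constructor
      · intro x
        simp only [if_neg hAy]
        exact hQ.1 x
      · simp only [if_neg hAy]
        exact hQ.2
  · intro y x hQx
    by_cases hAy : 0 < A y
    · simp only [if_pos hAy, hb, hQx]
      simp
    · simp only [if_neg hAy]
      exact hQx
  · intro x y
    have hJ : Jrho ρ Q P x y = b y x * A y ^ ρ / Z := rfl
    by_cases hAy : 0 < A y
    · simp only [if_pos hAy]
      rw [hJ]
      have h3 : A y ^ (1 + ρ) = A y ^ ρ * A y := by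
        rw [add_comm, Real.rpow_add hAy, Real.rpow_one]
      rw [h3]
      field_simp
    · have hA0 : A y = 0 := le_antisymm (not_lt.1 hAy) (hAnn y)
      have hb0 : b y x = 0 :=
        (Finset.sum_eq_zero_iff_of_nonneg (fun x _ => hbnn y x)).1
          ((hAb y).symm.trans hA0) x (Finset.mem_univ x)
      simp only [if_neg hAy]
      rw [hJ, hb0, hA0, Real.zero_rpow (by linarith : (1:ℝ) + ρ ≠ 0)]
      simp

/-- an admissible deterministic kernel at `ρ = -1`. -/
lemma exists_adm {Q : 𝓧 → ℝ} {P : 𝓧 → 𝓨 → ℝ} (hQ : IsPMF Q) :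
    ∃ V' : 𝓨 → 𝓧 → ℝ, IsCondPMF V' ∧ AdmissibleAtM1 Q P V' := by
  classical
  have hexQ := exists_Q_pos hQ
  set xs : 𝓨 → 𝓧 := fun y => (maxP_attained (P := P) hexQ y).choose with hxs
  have hxsp : ∀ y, 0 < Q (xs y) ∧ P (xs y) y = maxP Q P y :=
    fun y => (maxP_attained hexQ y).choose_spec
  refine ⟨fun y x => if x = xs y then 1 else 0, ?_, ?_⟩
  · intro y
    constructor
    · intro x
      dsimp only
      split_ifs <;> norm_num
    · dsimp only
      simp
  · intro y x hnot
    have : x ≠ xs y := by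
      rintro rfl
      apply hnot
      refine ⟨(hxsp y).1, fun a ha => ?_⟩
      rw [(hxsp y).2]
      exact le_maxP ha y
    simp [this]

lemma Tm1_pmf {Q : 𝓧 → ℝ} {P : 𝓧 → 𝓨 → ℝ} [Nonempty 𝓨]
    (hP : IsChannel P) (hQ : IsPMF Q) : IsPMF (Tm1 Q P) := by
  have hM := sum_maxP_pos hP hQ
  constructor
  · intro y
    exact div_nonneg (maxP_nonneg hP (exists_Q_pos hQ) y) hM.le
  · have h : ∀ y, Tm1 Q P y = maxP Q P y / ∑ y', maxP Q P y' := fun _ => rfl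
    rw [Finset.sum_congr rfl (fun y _ => h y), ← Finset.sum_div]
    exact div_self hM.ne'

/-- admissible kernels have support in `supp Q` and attain `maxP`. -/
lemma adm_facts {Q : 𝓧 → ℝ} {P : 𝓧 → 𝓨 → ℝ} {V' : 𝓨 → 𝓧 → ℝ}
    (hadm : AdmissibleAtM1 Q P V') :
    (∀ y x, Q x = 0 → V' y x = 0) ∧
    (∀ y x, V' y x ≠ 0 → P x y = maxP Q P y) := by
  constructor
  · intro y x hQx
    apply hadm
    rintro ⟨h1, -⟩
    rw [hQx] at h1
    exact lt_irrefl 0 h1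
  · intro y x hV
    by_contra hne
    apply hV
    apply hadm
    rintro ⟨h1, h2⟩
    apply hne
    haveI : Nonempty {a // 0 < Q a} := ⟨⟨x, h1⟩⟩
    refine le_antisymm (le_maxP h1 y) ?_
    exact ciSup_le fun a => h2 a.1 a.2

end Constructions


section Limit

variable {𝓧 𝓨 : Type*} [Fintype 𝓧] [Fintype 𝓨]

lemma AR_pow_tendsto {Q : 𝓧 → ℝ} {P : 𝓧 → 𝓨 → ℝ}
    (hP : IsChannel P) (hQ : IsPMF Q) (y : 𝓨) :
    Tendsto (fun r : ℝ => AR r Q P y ^ (1 + r)) (𝓝[>] (-1 : ℝ))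
      (𝓝 (maxP Q P y)) := by
  have hexQ := exists_Q_pos hQ
  have hmem : ∀ᶠ r : ℝ in 𝓝[>] (-1 : ℝ), (-1 : ℝ) < r := self_mem_nhdsWithin
  rcases eq_or_lt_of_le (maxP_nonneg hP hexQ y) with hm0 | hmpos
  · -- maxP = 0
    rw [← hm0]
    apply Tendsto.congr' _ tendsto_const_nhds
    filter_upwards [hmem] with r hr
    have h1r : (0:ℝ) < 1 + r := by linarith
    have hA0 : AR r Q P y = 0 := by
      apply Finset.sum_eq_zero
      intro x _
      rcases eq_or_lt_of_le (hQ.1 x) with hQx | hQx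
      · rw [← hQx]; ring
      · have hle := le_maxP (P := P) hQx y
        rw [← hm0] at hle
        have hPx : P x y = 0 := le_antisymm hle ((hP x).1 y)
        rw [hPx, Real.zero_rpow (by positivity : (1:ℝ)/(1+r) ≠ 0)]
        ring
    rw [hA0, Real.zero_rpow h1r.ne']
  · -- maxP > 0
    obtain ⟨xs, hxsQ, hxsP⟩ := maxP_attained hexQ y
    set m := maxP Q P y with hm
    have hlb : ∀ᶠ r : ℝ in 𝓝[>] (-1:ℝ),
        Q xs ^ (1 + r) * m ≤ AR r Q P y ^ (1 + r) := by
      filter_upwards [hmem] with r hr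
      have h1r : (0:ℝ) < 1 + r := by linarith
      have hs : (0:ℝ) < 1 / (1 + r) := by positivity
      have h1 : Q xs * m ^ (1/(1+r)) ≤ AR r Q P y := by
        rw [← hxsP]
        exact Finset.single_le_sum
          (fun x _ => mul_nonneg (hQ.1 x) (Real.rpow_nonneg ((hP x).1 y) _))
          (Finset.mem_univ xs)
      have h2 : (Q xs * m ^ (1/(1+r))) ^ (1+r) ≤ AR r Q P y ^ (1+r) :=
        Real.rpow_le_rpow (by positivity) h1 h1r.le
      have hmss : (m ^ (1/(1+r))) ^ (1+r) = m := by
        rw [← Real.rpow_mul hmpos.le, one_div, inv_mul_cancel₀ h1r.ne',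
          Real.rpow_one]
      calc Q xs ^ (1+r) * m = (Q xs * m ^ (1/(1+r))) ^ (1+r) := by
            rw [Real.mul_rpow hxsQ.le (Real.rpow_nonneg hmpos.le _), hmss]
        _ ≤ AR r Q P y ^ (1+r) := h2
    have hub : ∀ᶠ r : ℝ in 𝓝[>] (-1:ℝ), AR r Q P y ^ (1 + r) ≤ m := by
      filter_upwards [hmem] with r hr
      have h1r : (0:ℝ) < 1 + r := by linarith
      have hs : (0:ℝ) < 1 / (1 + r) := by positivity
      have h1 : AR r Q P y ≤ m ^ (1/(1+r)) := by
        calc AR r Q P y ≤ ∑ x, Q x * m ^ (1/(1+r)) := by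
              apply Finset.sum_le_sum
              intro x _
              rcases eq_or_lt_of_le (hQ.1 x) with hQx | hQx
              · rw [← hQx]; simp
              · exact mul_le_mul_of_nonneg_left
                  (Real.rpow_le_rpow ((hP x).1 y) (le_maxP hQx y) hs.le) hQx.le
          _ = m ^ (1/(1+r)) := by rw [← Finset.sum_mul, hQ.2, one_mul]
      calc AR r Q P y ^ (1+r) ≤ (m ^ (1/(1+r))) ^ (1+r) :=
            Real.rpow_le_rpow (AR_nonneg hQ.1 y (fun x => (hP x).1 y)) h1 h1r.le
        _ = m := by
            rw [← Real.rpow_mul hmpos.le, one_div, inv_mul_cancel₀ h1r.ne',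
              Real.rpow_one]
    have hlbt : Tendsto (fun r : ℝ => Q xs ^ (1 + r) * m) (𝓝[>] (-1:ℝ)) (𝓝 m) := by
      have hc : Continuous (fun r : ℝ => Real.exp (Real.log (Q xs) * (1 + r)) * m) := by
        continuity
      have heq : (fun r : ℝ => Q xs ^ (1 + r) * m)
          = fun r : ℝ => Real.exp (Real.log (Q xs) * (1 + r)) * m := by
        funext r
        rw [Real.rpow_def_of_pos hxsQ]
      rw [heq]
      have := hc.tendsto (-1 : ℝ)
      simp only [add_neg_cancel, mul_zero, Real.exp_zero, one_mul] at this
      exact this.mono_left nhdsWithin_le_nhds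
    exact tendsto_of_tendsto_of_tendsto_of_le_of_le' hlbt tendsto_const_nhds hlb hub

lemma E0_limit {Q : 𝓧 → ℝ} {P : 𝓧 → 𝓨 → ℝ} [Nonempty 𝓨]
    (hP : IsChannel P) (hQ : IsPMF Q) :
    Tendsto (fun r : ℝ => E0 r Q P) (𝓝[>] (-1 : ℝ)) (𝓝 (E0m1 Q P)) := by
  have hM : 0 < ∑ y, maxP Q P y := sum_maxP_pos hP hQ
  have hsum : Tendsto (fun r : ℝ => ∑ y, AR r Q P y ^ (1 + r)) (𝓝[>] (-1:ℝ))
      (𝓝 (∑ y, maxP Q P y)) :=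
    tendsto_finset_sum _ (fun y _ => AR_pow_tendsto hP hQ y)
  have hlog : Tendsto (fun r : ℝ => - Real.log (∑ y, AR r Q P y ^ (1 + r)))
      (𝓝[>] (-1:ℝ)) (𝓝 (- Real.log (∑ y, maxP Q P y))) :=
    (((Real.continuousAt_log hM.ne').tendsto.comp hsum)).neg
  exact hlog

end Limit

theorem stmt_7 {𝓧 𝓨 : Type*} [Fintype 𝓧] [Fintype 𝓨] [Nonempty 𝓧] [Nonempty 𝓨]
    (P : 𝓧 → 𝓨 → ℝ) (hP : IsChannel P) (Q : 𝓧 → ℝ) (hQ : IsPMF Q)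
    (ρ : ℝ) (hρ : -1 ≤ ρ) :
    Tendsto (fun r : ℝ => E0 r Q P) (𝓝[>] (-1 : ℝ)) (𝓝 (E0m1 Q P))
    ∧ sInf {v | ∃ T : 𝓨 → ℝ, ∃ V : 𝓨 → 𝓧 → ℝ, IsPMF T ∧ IsCondPMF V ∧
          (∀ y x, Q x = 0 → V y x = 0) ∧
          v = DQP T V Q P + (ρ : EReal) * DTQ T V Q}
        = ((E0full ρ Q P : ℝ) : EReal)
    ∧ (-1 < ρ →
        (∃ T : 𝓨 → ℝ, ∃ V : 𝓨 → 𝓧 → ℝ, IsPMF T ∧ IsCondPMF V ∧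
          (∀ y x, Q x = 0 → V y x = 0) ∧
          DQP T V Q P + (ρ : EReal) * DTQ T V Q = ((E0 ρ Q P : ℝ) : EReal) ∧
          ∀ x y, T y * V y x = Jrho ρ Q P x y)
        ∧ ∀ (T : 𝓨 → ℝ) (V : 𝓨 → 𝓧 → ℝ), IsPMF T → IsCondPMF V →
            (∀ y x, Q x = 0 → V y x = 0) →
            DQP T V Q P + (ρ : EReal) * DTQ T V Q = ((E0 ρ Q P : ℝ) : EReal) →
            ∀ x y, T y * V y x = Jrho ρ Q P x y)
    ∧ (ρ = -1 →
        (∀ (T : 𝓨 → ℝ) (V : 𝓨 → 𝓧 → ℝ), IsPMF T → IsCondPMF V →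
            (∀ y x, Q x = 0 → V y x = 0) →
            DQP T V Q P + (ρ : EReal) * DTQ T V Q = ((E0m1 Q P : ℝ) : EReal) →
            ∃ V' : 𝓨 → 𝓧 → ℝ, IsCondPMF V' ∧ AdmissibleAtM1 Q P V' ∧
              ∀ x y, T y * V y x = Tm1 Q P y * V' y x)
        ∧ ∀ V' : 𝓨 → 𝓧 → ℝ, IsCondPMF V' → AdmissibleAtM1 Q P V' →
            DQP (Tm1 Q P) V' Q P + (ρ : EReal) * DTQ (Tm1 Q P) V' Q
              = ((E0m1 Q P : ℝ) : EReal)) := by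
  classical
  constructor
  · exact E0_limit hP hQ
  refine ⟨?_, ?_, ?_⟩
  · -- the sInf
    by_cases hρ1 : ρ = -1
    · subst hρ1
      have hE : E0full (-1 : ℝ) Q P = E0m1 Q P := by simp [E0full]
      rw [hE]
      apply IsLeast.csInf_eq
      constructor
      · obtain ⟨V', hV', hadm⟩ := exists_adm (P := P) hQ
        have hsupp' := (adm_facts hadm).1
        have hval := (ereal_main_m1 hP hQ (Tm1_pmf hP hQ) hV' hsupp').2.mpr
          ⟨fun y => rfl, fun y x hTV =>
            (adm_facts hadm).2 y x (fun hz => hTV (by rw [hz]; ring))⟩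
        exact ⟨Tm1 Q P, V', Tm1_pmf hP hQ, hV', hsupp', hval.symm⟩
      · rintro v ⟨T, V, hT, hV, hsupp, rfl⟩
        exact (ereal_main_m1 hP hQ hT hV hsupp).1
    · have hρ' : -1 < ρ := lt_of_le_of_ne hρ (Ne.symm hρ1)
      have hE : E0full ρ Q P = E0 ρ Q P := by simp [E0full, hρ1]
      rw [hE]
      apply IsLeast.csInf_eq
      constructor
      · obtain ⟨T, V, hT, hV, hsupp, hJ⟩ := exists_min hρ' hP hQ
        exact ⟨T, V, hT, hV, hsupp,
          ((ereal_main hρ' hP hQ hT hV hsupp).2.mpr (fun x y => hJ x y)).symm⟩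
      · rintro v ⟨T, V, hT, hV, hsupp, rfl⟩
        exact (ereal_main hρ' hP hQ hT hV hsupp).1
  · -- ρ > -1 : minimizer existence and uniqueness
    intro hρ'
    constructor
    · obtain ⟨T, V, hT, hV, hsupp, hJ⟩ := exists_min hρ' hP hQ
      exact ⟨T, V, hT, hV, hsupp,
        (ereal_main hρ' hP hQ hT hV hsupp).2.mpr (fun x y => hJ x y),
        fun x y => hJ x y⟩
    · intro T V hT hV hsupp heq
      exact (ereal_main hρ' hP hQ hT hV hsupp).2.mp heq
  · -- ρ = -1 : characterization
    intro hρ1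
    subst hρ1
    constructor
    · intro T V hT hV hsupp heq
      obtain ⟨hTeq, hPeq⟩ := (ereal_main_m1 hP hQ hT hV hsupp).2.mp heq
      obtain ⟨W, hW, hWadm⟩ := exists_adm (P := P) hQ
      refine ⟨fun y x => if 0 < Tm1 Q P y then V y x else W y x, ?_, ?_, ?_⟩
      · intro y
        by_cases h : 0 < Tm1 Q P y
        · simp only [if_pos h]
          exact hV y
        · simp only [if_neg h]
          exact hW y
      · intro y x hnot
        dsimp only
        split_ifs with h
        · by_contra hVne
          apply hnot
          have hTy : T y ≠ 0 := by rw [hTeq y]; exact h.ne'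
          have hTV : T y * V y x ≠ 0 := mul_ne_zero hTy hVne
          have hQx : Q x ≠ 0 := fun hq => hVne (hsupp y x hq)
          have hQpos : 0 < Q x := lt_of_le_of_ne (hQ.1 x) (Ne.symm hQx)
          refine ⟨hQpos, fun a ha => ?_⟩
          rw [hPeq y x hTV]
          exact le_maxP ha y
        · exact hWadm y x hnot
      · intro x y
        dsimp only
        split_ifs with h
        · rw [hTeq y]
        · have hTm0 : Tm1 Q P y = 0 :=
            le_antisymm (not_lt.1 h) ((Tm1_pmf hP hQ).1 y)
          rw [hTeq y, hTm0]
          ring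
    · intro V' hV' hadm
      have hsupp' := (adm_facts hadm).1
      exact (ereal_main_m1 hP hQ (Tm1_pmf hP hQ) hV' hsupp').2.mpr
        ⟨fun y => rfl, fun y x hTV =>
          (adm_facts hadm).2 y x (fun hz => hTV (by rw [hz]; ring))⟩
end

section
/- For every probability mass function Q on 𝒳, E₀(−1,Q) + C(supp(Q)) ≤ 0. -/
open scoped BigOperators
open Filter Topology

lemma MI_le_logS_aux {𝓧 𝓨 : Type*} [Fintype 𝓧] [Fintype 𝓨]
    (P : 𝓧 → 𝓨 → ℝ) (hP : IsChannel P) (Q : 𝓧 → ℝ) (hQ : IsPMF Q)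
    (Q' : 𝓧 → ℝ) (hQ' : IsPMF Q') (hsupp : ∀ x, 0 < Q' x → 0 < Q x) :
    MI Q' P ≤ Real.log (∑ y, maxP Q P y) := by
  obtain ⟨x0, hx0⟩ : ∃ x0, 0 < Q x0 := by
    by_contra h
    push_neg at h
    have h0 : ∑ a, Q a = 0 := Finset.sum_eq_zero fun a _ => le_antisymm (h a) (hQ.1 a)
    rw [hQ.2] at h0; norm_num at h0
  set S := ∑ y, maxP Q P y with hSdef
  have hmax_ge : ∀ (y : 𝓨) (x : 𝓧), 0 < Q x → P x y ≤ maxP Q P y := by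
    intro y x hx
    exact le_ciSup (Set.Finite.bddAbove (Set.finite_range
      (fun z : {x // 0 < Q x} => P z.1 y))) ⟨x, hx⟩
  have hmax_nn : ∀ y, 0 ≤ maxP Q P y := fun y =>
    le_trans ((hP x0).1 y) (hmax_ge y x0 hx0)
  have hS1 : (1:ℝ) ≤ S := by
    calc (1:ℝ) = ∑ y, P x0 y := (hP x0).2.symm
    _ ≤ S := Finset.sum_le_sum fun y _ => hmax_ge y x0 hx0
  have hS0 : (0:ℝ) < S := lt_of_lt_of_le one_pos hS1
  set W : 𝓨 → ℝ := fun y => ∑ a, Q' a * P a y with hWdef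
  have hWnn : ∀ y, 0 ≤ W y := fun y =>
    Finset.sum_nonneg fun a _ => mul_nonneg (hQ'.1 a) ((hP a).1 y)
  have key : ∀ x y, (if Q' x * P x y = 0 then (0:ℝ)
      else Q' x * P x y * Real.log (P x y / ∑ a, Q' a * P a y)) ≤
      Q' x * P x y * Real.log S + Q' x * P x y * (maxP Q P y / (S * W y))
        - Q' x * P x y := by
    intro x y
    by_cases hq : Q' x * P x y = 0
    · simp [hq]
    · have hq0 : 0 < Q' x * P x y :=
        lt_of_le_of_ne (mul_nonneg (hQ'.1 x) ((hP x).1 y)) (Ne.symm hq)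
      have hQ'x : 0 < Q' x := by
        by_contra h
        have : Q' x = 0 := le_antisymm (not_lt.mp h) (hQ'.1 x)
        rw [this] at hq0; simp at hq0
      have hPxy : 0 < P x y := by
        by_contra h
        have : P x y = 0 := le_antisymm (not_lt.mp h) ((hP x).1 y)
        rw [this] at hq0; simp at hq0
      have hW : 0 < W y :=
        lt_of_lt_of_le hq0 (Finset.single_le_sum
          (f := fun a => Q' a * P a y)
          (fun a _ => mul_nonneg (hQ'.1 a) ((hP a).1 y)) (Finset.mem_univ x))
      have hmaxy : 0 < maxP Q P y := lt_of_lt_of_le hPxy (hmax_ge y x (hsupp x hQ'x))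
      have hlog : Real.log (P x y / W y) ≤
          Real.log S + maxP Q P y / (S * W y) - 1 := by
        have h1 : Real.log (P x y / W y) ≤ Real.log (maxP Q P y / W y) :=
          Real.log_le_log (div_pos hPxy hW)
            ((div_le_div_iff_of_pos_right hW).mpr (hmax_ge y x (hsupp x hQ'x)))
        have h2 : maxP Q P y / W y = S * (maxP Q P y / (S * W y)) := by
          field_simp
        have h3 : Real.log (S * (maxP Q P y / (S * W y)))
            = Real.log S + Real.log (maxP Q P y / (S * W y)) :=
          Real.log_mul (ne_of_gt hS0) (ne_of_gt (div_pos hmaxy (mul_pos hS0 hW)))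
        have h4 : Real.log (maxP Q P y / (S * W y)) ≤ maxP Q P y / (S * W y) - 1 :=
          Real.log_le_sub_one_of_pos (div_pos hmaxy (mul_pos hS0 hW))
        rw [h2, h3] at h1
        linarith
      rw [if_neg hq]
      have := mul_le_mul_of_nonneg_left hlog (le_of_lt hq0)
      show Q' x * P x y * Real.log (P x y / W y) ≤ _
      nlinarith
  have hsum1 : ∑ x, ∑ y, Q' x * P x y = 1 := by
    have : ∀ x, ∑ y, Q' x * P x y = Q' x := by
      intro x
      rw [← Finset.mul_sum, (hP x).2, mul_one]
    simp only [this, hQ'.2]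
  have hA : (∑ x, ∑ y, Q' x * P x y * (maxP Q P y / (S * W y))) ≤ 1 := by
    rw [Finset.sum_comm]
    have heach : ∀ y : 𝓨, ∑ x, Q' x * P x y * (maxP Q P y / (S * W y))
        ≤ maxP Q P y / S := by
      intro y
      rw [← Finset.sum_mul]
      show W y * (maxP Q P y / (S * W y)) ≤ maxP Q P y / S
      by_cases hWy : W y = 0
      · rw [hWy]; simp
        exact div_nonneg (hmax_nn y) (le_of_lt hS0)
      · have hWy' : 0 < W y := lt_of_le_of_ne (hWnn y) (Ne.symm hWy)
        rw [show W y * (maxP Q P y / (S * W y)) = maxP Q P y / S by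
          field_simp]
    calc (∑ y, ∑ x, Q' x * P x y * (maxP Q P y / (S * W y)))
        ≤ ∑ y, maxP Q P y / S := Finset.sum_le_sum fun y _ => heach y
    _ = S / S := by rw [← Finset.sum_div]
    _ = 1 := div_self (ne_of_gt hS0)
  calc MI Q' P ≤ ∑ x, ∑ y, (Q' x * P x y * Real.log S
        + Q' x * P x y * (maxP Q P y / (S * W y)) - Q' x * P x y) :=
      Finset.sum_le_sum fun x _ => Finset.sum_le_sum fun y _ => key x y
  _ = (∑ x, ∑ y, Q' x * P x y) * Real.log S
      + (∑ x, ∑ y, Q' x * P x y * (maxP Q P y / (S * W y)))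
      - (∑ x, ∑ y, Q' x * P x y) := by
      simp only [Finset.sum_sub_distrib, Finset.sum_add_distrib, Finset.sum_mul]
  _ = Real.log S + (∑ x, ∑ y, Q' x * P x y * (maxP Q P y / (S * W y))) - 1 := by
      rw [hsum1]; ring
  _ ≤ Real.log S := by linarith

theorem stmt_14 {𝓧 𝓨 : Type*} [Fintype 𝓧] [Fintype 𝓨] [Nonempty 𝓧] [Nonempty 𝓨]
    (P : 𝓧 → 𝓨 → ℝ) (hP : IsChannel P) (Q : 𝓧 → ℝ) (hQ : IsPMF Q) :
    E0m1 Q P + capacity P {x | 0 < Q x} ≤ 0 := by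
  have hx0 : ∃ x0, 0 < Q x0 := by
    by_contra h
    push_neg at h
    have h0 : ∑ a, Q a = 0 := Finset.sum_eq_zero fun a _ => le_antisymm (h a) (hQ.1 a)
    rw [hQ.2] at h0; norm_num at h0
  obtain ⟨x0, hx0⟩ := hx0
  have hmax_ge : ∀ (y : 𝓨) (x : 𝓧), 0 < Q x → P x y ≤ maxP Q P y := by
    intro y x hx
    exact le_ciSup (Set.Finite.bddAbove (Set.finite_range
      (fun z : {x // 0 < Q x} => P z.1 y))) ⟨x, hx⟩
  have hS1 : (1:ℝ) ≤ ∑ y, maxP Q P y := by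
    calc (1:ℝ) = ∑ y, P x0 y := (hP x0).2.symm
    _ ≤ _ := Finset.sum_le_sum fun y _ => hmax_ge y x0 hx0
  have hlogS : 0 ≤ Real.log (∑ y, maxP Q P y) := Real.log_nonneg hS1
  have hcap : capacity P {x | 0 < Q x} ≤ Real.log (∑ y, maxP Q P y) := by
    apply Real.sSup_le _ hlogS
    rintro c ⟨Q', hQ', hQ'supp, rfl⟩
    exact MI_le_logS_aux P hP Q hQ Q' hQ' hQ'supp
  have : E0m1 Q P = - Real.log (∑ y, maxP Q P y) := rfl
  rw [this]
  linarith
end
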